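/- Let M = (S, A, s0, p, γ) be a finite discounted MDP without reward, β > 0, and π a stochastic policy with π(a|s) > 0 for all (s,a). A reward r ∈ ℝ^{S×A} belongs to R^{BIRL,S}_{M,π} if and only if there exists V ∈ ℝ^S such that for all (s,a), r(s,a) = V(s) − γ ∑_{s'} p(s'|s,a) V(s') + β·log(π(a|s)/max_{a'∈A} π(a'|s)). Moreover, for such r, V(s) = V*(s;p,r) for all s, and β·log(π(a|s)/max_{a'} π(a'|s)) = A*(s,a;p,r) for all (s,a). -/

import Mathlib

open scoped ENNReal

open scoped BigOperators
open MeasureTheory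

/-- A finite discounted MDP without reward. -/
structure MDP (S A : Type) [Fintype S] [Fintype A] where
  s0 : S
  p : S → A → S → ℝ
  p_nonneg : ∀ s a s', 0 ≤ p s a s'
  p_sum_one : ∀ s a, ∑ s', p s a s' = 1
  disc : ℝ
  disc_nonneg : 0 ≤ disc
  disc_lt_one : disc < 1

section Defs

variable {S A : Type} [Fintype S] [Fintype A] [DecidableEq S] [DecidableEq A]

/-- `π` is a (stochastic) policy: each `π s` is a probability distribution on actions. -/
def IsPolicy (π : S → A → ℝ) : Prop :=
  (∀ s a, 0 ≤ π s a) ∧ ∀ s, ∑ a, π s a = 1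

open Classical in
/-- The stochastic policy induced by a deterministic policy `d`. -/
noncomputable def detPolicy (d : S → A) : S → A → ℝ :=
  fun s a => if a = d s then 1 else 0

/-- The state-transition matrix of a policy. -/
noncomputable def Pmat (M : MDP S A) (π : S → A → ℝ) : Matrix S S ℝ :=
  Matrix.of fun s s' => ∑ a, π s a * M.p s a s'

/-- The value function `V^π(s; p, r)`. -/
noncomputable def Vpi (M : MDP S A) (π : S → A → ℝ) (r : S × A → ℝ) (s : S) : ℝ :=
  ∑' t : ℕ, M.disc ^ t * ((Pmat M π ^ t).mulVec (fun s' => ∑ a, π s' a * r (s', a))) s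

/-- The optimal value function `V*(s; p, r)`. -/
noncomputable def Vstar (M : MDP S A) (r : S × A → ℝ) (s : S) : ℝ :=
  ⨆ π : {π : S → A → ℝ // IsPolicy π}, Vpi M π.1 r s

noncomputable def Qpi (M : MDP S A) (π : S → A → ℝ) (r : S × A → ℝ) (s : S) (a : A) : ℝ :=
  r (s, a) + M.disc * ∑ s', M.p s a s' * Vpi M π r s'

noncomputable def Api (M : MDP S A) (π : S → A → ℝ) (r : S × A → ℝ) (s : S) (a : A) : ℝ :=
  Qpi M π r s a - Vpi M π r s

noncomputable def Qstar (M : MDP S A) (r : S × A → ℝ) (s : S) (a : A) : ℝ :=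
  r (s, a) + M.disc * ∑ s', M.p s a s' * Vstar M r s'

noncomputable def Astar (M : MDP S A) (r : S × A → ℝ) (s : S) (a : A) : ℝ :=
  Qstar M r s a - Vstar M r s

/-- The soft (entropy-regularized) value function `V^π_λ(s; p, r)`. -/
noncomputable def VpiSoft (M : MDP S A) (lam : ℝ) (π : S → A → ℝ) (r : S × A → ℝ) (s : S) : ℝ :=
  ∑' t : ℕ, M.disc ^ t *
    ((Pmat M π ^ t).mulVec
      (fun s' => ∑ a, π s' a * (r (s', a) - lam * Real.log (π s' a)))) s

noncomputable def VstarSoft (M : MDP S A) (lam : ℝ) (r : S × A → ℝ) (s : S) : ℝ :=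
  ⨆ π : {π : S → A → ℝ // IsPolicy π}, VpiSoft M lam π.1 r s

noncomputable def QstarSoft (M : MDP S A) (lam : ℝ) (r : S × A → ℝ) (s : S) (a : A) : ℝ :=
  r (s, a) + M.disc * ∑ s', M.p s a s' * VstarSoft M lam r s'

noncomputable def AstarSoft (M : MDP S A) (lam : ℝ) (r : S × A → ℝ) (s : S) (a : A) : ℝ :=
  QstarSoft M lam r s a - VstarSoft M lam r s

/-- The OPT feasible set `R^{OPT,S̄}_{M,d}` of a deterministic policy `d`. -/
def ROPT (M : MDP S A) (Sbar : Set S) (d : S → A) : Set (S × A → ℝ) :=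
  {r | ∀ s ∈ Sbar, ∀ a, Qstar M r s a ≤ Qstar M r s (d s)}

/-- The MCE feasible set `R^{MCE,S}_{M,π}` (with `S̄ = S`). -/
def RMCE (M : MDP S A) (lam : ℝ) (π : S → A → ℝ) : Set (S × A → ℝ) :=
  {r | ∀ s a, π s a =
      Real.exp (QstarSoft M lam r s a / lam) / ∑ a', Real.exp (QstarSoft M lam r s a' / lam)}

/-- The BIRL feasible set `R^{BIRL,S}_{M,π}` (with `S̄ = S`). -/
def RBIRL (M : MDP S A) (bet : ℝ) (π : S → A → ℝ) : Set (S × A → ℝ) :=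
  {r | ∀ s a, π s a =
      Real.exp (Qstar M r s a / bet) / ∑ a', Real.exp (Qstar M r s a' / bet)}

open Classical in
/-- The matrix `W_{p,π}`. -/
noncomputable def Wmat (M : MDP S A) (π : S → A → ℝ) : Matrix S S ℝ :=
  Matrix.of fun s s' => (if s' = s then (1 : ℝ) else 0) - M.disc * ∑ a, π s a * M.p s a s'

/-- `k_π := |det W_{p,π}|^{-1/|S|}`. -/
noncomputable def kpi (M : MDP S A) (π : S → A → ℝ) : ℝ :=
  |(Wmat M π).det| ^ (-(1 : ℝ) / (Fintype.card S : ℝ))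

/-- `𝒮R^{OPT}_M`. -/
def SROPT (M : MDP S A) (C1 C2 : ℝ) : Set (S × A → ℝ) :=
  {r | ∀ π : S → A → ℝ, IsPolicy π → (∀ s, Vpi M π r s = Vstar M r s) →
      ∀ s a, |Vpi M π r s| ≤ C1 * kpi M π ∧ |Api M π r s a| ≤ C2}

/-- `𝒮R^{MCE}_M`. -/
def SRMCE (M : MDP S A) (lam C1 C2 : ℝ) : Set (S × A → ℝ) :=
  {r | ∀ s a, |VstarSoft M lam r s| ≤ C1 ∧ |AstarSoft M lam r s a| ≤ C2}

/-- `𝒮R^{BIRL}_M`. -/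
def SRBIRL (M : MDP S A) (C1 C2 : ℝ) : Set (S × A → ℝ) :=
  {r | ∀ s a, |Vstar M r s| ≤ C1 ∧ |Astar M r s a| ≤ C2}

/-- Discounted state occupancy `∑_{t≥0} γ^t P_{M,π}(s_t = s)`. -/
noncomputable def occ (M : MDP S A) (π : S → A → ℝ) (s : S) : ℝ :=
  ∑' t : ℕ, M.disc ^ t * (Pmat M π ^ t) M.s0 s

/-- The support `S_{M,π}` of a policy: states reachable with positive probability. -/
def supp (M : MDP S A) (π : S → A → ℝ) : Set S := {s | 0 < occ M π s}

end Defs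

/-- The unit hypercube `[-1,1]^{S×A}`. -/
def cube (S A : Type) [Fintype S] [Fintype A] : Set (S × A → ℝ) :=
  {r | ∀ sa, |r sa| ≤ 1}
set_option linter.unusedSectionVars false

section AuxMDP

variable {S A : Type} [Fintype S] [Fintype A] [DecidableEq S] [DecidableEq A]

/-- Row-stochastic nonnegative matrix. -/
def RowStoch (Q : Matrix S S ℝ) : Prop := (∀ s s', 0 ≤ Q s s') ∧ ∀ s, ∑ s', Q s s' = 1

lemma stoch_one : RowStoch (1 : Matrix S S ℝ) := by
  constructor
  · intro s s'; by_cases h : s = s' <;> simp [Matrix.one_apply, h]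
  · intro s; simp [Matrix.one_apply]

lemma stoch_mul {Q Q' : Matrix S S ℝ} (h : RowStoch Q) (h' : RowStoch Q') : RowStoch (Q * Q') := by
  constructor
  · intro s s'
    rw [Matrix.mul_apply]
    exact Finset.sum_nonneg fun k _ => mul_nonneg (h.1 s k) (h'.1 k s')
  · intro s
    simp only [Matrix.mul_apply]
    rw [Finset.sum_comm]
    rw [show ∑ k, ∑ s', Q s k * Q' k s' = ∑ k, Q s k * ∑ s', Q' k s' by
      exact Finset.sum_congr rfl fun k _ => (Finset.mul_sum _ _ _).symm]
    simp only [h'.2]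
    simpa using h.2 s

lemma stoch_pow {Q : Matrix S S ℝ} (h : RowStoch Q) (t : ℕ) : RowStoch (Q ^ t) := by
  induction t with
  | zero => simpa using stoch_one
  | succ n ih => rw [pow_succ]; exact stoch_mul ih h

lemma stoch_mulVec_abs_le {Q : Matrix S S ℝ} (h : RowStoch Q) (v : S → ℝ) (s : S) :
    |Q.mulVec v s| ≤ ‖v‖ := by
  have hv : Q.mulVec v s = ∑ s', Q s s' * v s' := rfl
  rw [hv]
  calc |∑ s', Q s s' * v s'| ≤ ∑ s', |Q s s' * v s'| := Finset.abs_sum_le_sum_abs _ _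
    _ ≤ ∑ s', Q s s' * ‖v‖ := by
        apply Finset.sum_le_sum; intro s' _
        rw [abs_mul, abs_of_nonneg (h.1 s s')]
        exact mul_le_mul_of_nonneg_left
          (by simpa [Real.norm_eq_abs] using norm_le_pi_norm v s') (h.1 s s')
    _ = ‖v‖ := by rw [← Finset.sum_mul, h.2 s, one_mul]

lemma stoch_mulVec_le {Q : Matrix S S ℝ} (h : RowStoch Q) {v : S → ℝ} {c : ℝ}
    (hc : ∀ s', v s' ≤ c) (s : S) : Q.mulVec v s ≤ c := by
  have hv : Q.mulVec v s = ∑ s', Q s s' * v s' := rfl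
  rw [hv]
  calc ∑ s', Q s s' * v s' ≤ ∑ s', Q s s' * c :=
        Finset.sum_le_sum fun s' _ => mul_le_mul_of_nonneg_left (hc s') (h.1 s s')
    _ = c := by rw [← Finset.sum_mul, h.2 s, one_mul]

lemma pmat_stoch (M : MDP S A) {π : S → A → ℝ} (hπ : IsPolicy π) : RowStoch (Pmat M π) := by
  constructor
  · intro s s'
    exact Finset.sum_nonneg fun a _ => mul_nonneg (hπ.1 s a) (M.p_nonneg s a s')
  · intro s
    show ∑ s', ∑ a, π s a * M.p s a s' = 1
    rw [Finset.sum_comm]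
    rw [show ∑ a, ∑ s', π s a * M.p s a s' = ∑ a, π s a * ∑ s', M.p s a s' by
      exact Finset.sum_congr rfl fun a _ => (Finset.mul_sum _ _ _).symm]
    simp only [M.p_sum_one, mul_one]
    exact hπ.2 s

/-- Average reward vector of a policy. -/
noncomputable def Rvec (π : S → A → ℝ) (r : S × A → ℝ) : S → ℝ := fun s => ∑ a, π s a * r (s, a)

lemma vpi_summable (M : MDP S A) {π : S → A → ℝ} (hπ : IsPolicy π) (w : S → ℝ) (s : S) :
    Summable fun t : ℕ => M.disc ^ t * ((Pmat M π ^ t).mulVec w) s := by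
  apply Summable.of_norm_bounded
    ((summable_geometric_of_lt_one M.disc_nonneg M.disc_lt_one).mul_left ‖w‖)
  intro t
  rw [Real.norm_eq_abs, abs_mul, abs_pow, abs_of_nonneg M.disc_nonneg, mul_comm]
  exact mul_le_mul_of_nonneg_right
    (stoch_mulVec_abs_le (stoch_pow (pmat_stoch M hπ) t) w s)
    (pow_nonneg M.disc_nonneg t)

lemma vpi_eq_tsum (M : MDP S A) (π : S → A → ℝ) (r : S × A → ℝ) (s : S) :
    Vpi M π r s = ∑' t : ℕ, M.disc ^ t * ((Pmat M π ^ t).mulVec (Rvec π r)) s := rfl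

/-- Bellman equation for `Vpi`. -/
lemma vpi_bellman (M : MDP S A) {π : S → A → ℝ} (hπ : IsPolicy π) (r : S × A → ℝ) (s : S) :
    Vpi M π r s = Rvec π r s + M.disc * (Pmat M π).mulVec (Vpi M π r) s := by
  set P := Pmat M π with hP
  set w := Rvec π r with hw
  rw [vpi_eq_tsum, Summable.tsum_eq_zero_add (vpi_summable M hπ w s)]
  congr 1
  · simp [Matrix.one_mulVec]
  · have hterm : ∀ t : ℕ, M.disc ^ (t + 1) * ((P ^ (t + 1)).mulVec w) s
        = ∑ s', M.disc * P s s' * (M.disc ^ t * ((P ^ t).mulVec w) s') := by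
      intro t
      rw [show (P ^ (t + 1)) = P * P ^ t from pow_succ' P t, ← Matrix.mulVec_mulVec]
      have : P.mulVec ((P ^ t).mulVec w) s = ∑ s', P s s' * ((P ^ t).mulVec w) s' := rfl
      rw [this, Finset.mul_sum]
      ring_nf
    rw [tsum_congr hterm, Summable.tsum_finsetSum (fun s' _ => by
      apply Summable.mul_left
      exact vpi_summable M hπ w s')]
    have : (P.mulVec fun s' => Vpi M π r s') s = ∑ s', P s s' * Vpi M π r s' := rfl
    rw [show (P.mulVec (Vpi M π r)) s = ∑ s', P s s' * Vpi M π r s' from rfl, Finset.mul_sum]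
    apply Finset.sum_congr rfl
    intro s' _
    rw [tsum_mul_left, vpi_eq_tsum]
    ring

end AuxMDP
section AuxOpt

variable {S A : Type} [Fintype S] [Fintype A] [DecidableEq S] [DecidableEq A] [Nonempty A]

/-- If `u ≤ γ Q u` pointwise for a stochastic `Q` and `0 ≤ γ < 1`, then `u ≤ 0`. -/
lemma sub_fixed_nonpos {Q : Matrix S S ℝ} (hQ : RowStoch Q) {γ : ℝ} (hγ0 : 0 ≤ γ) (hγ1 : γ < 1)
    {u : S → ℝ} (h : ∀ s, u s ≤ γ * Q.mulVec u s) : ∀ s, u s ≤ 0 := by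
  intro s
  have hne : (Finset.univ : Finset S).Nonempty := ⟨s, Finset.mem_univ s⟩
  obtain ⟨t, -, ht⟩ := Finset.exists_max_image Finset.univ u hne
  have hmax : ∀ s', u s' ≤ u t := fun s' => ht s' (Finset.mem_univ s')
  have h1 : u t ≤ γ * u t := by
    calc u t ≤ γ * Q.mulVec u t := h t
      _ ≤ γ * u t := mul_le_mul_of_nonneg_left (stoch_mulVec_le hQ hmax t) hγ0
  have h2 : u t ≤ 0 := by nlinarith
  exact le_trans (hmax s) h2

/-- Comparison: a subsolution of the policy Bellman equation is below `Vpi`. -/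
lemma le_vpi_of_sub (M : MDP S A) {π : S → A → ℝ} (hπ : IsPolicy π) (r : S × A → ℝ)
    {v : S → ℝ} (hv : ∀ s, v s ≤ Rvec π r s + M.disc * (Pmat M π).mulVec v s) :
    ∀ s, v s ≤ Vpi M π r s := by
  have key : ∀ s, (v - Vpi M π r) s ≤ M.disc * (Pmat M π).mulVec (v - Vpi M π r) s := by
    intro s
    have hb := vpi_bellman M hπ r s
    have hsub : (Pmat M π).mulVec (v - Vpi M π r) s
        = (Pmat M π).mulVec v s - (Pmat M π).mulVec (Vpi M π r) s := by
      rw [Matrix.mulVec_sub]; rfl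
    simp only [Pi.sub_apply, hsub]
    have := hv s
    nlinarith [M.disc_nonneg]
  intro s
  have := sub_fixed_nonpos (pmat_stoch M hπ) M.disc_nonneg M.disc_lt_one key s
  simpa [Pi.sub_apply, sub_nonpos] using this

/-- Comparison: a supersolution of the policy Bellman equation is above `Vpi`. -/
lemma vpi_le_of_super (M : MDP S A) {π : S → A → ℝ} (hπ : IsPolicy π) (r : S × A → ℝ)
    {v : S → ℝ} (hv : ∀ s, Rvec π r s + M.disc * (Pmat M π).mulVec v s ≤ v s) :
    ∀ s, Vpi M π r s ≤ v s := by
  have key : ∀ s, (Vpi M π r - v) s ≤ M.disc * (Pmat M π).mulVec (Vpi M π r - v) s := by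
    intro s
    have hb := vpi_bellman M hπ r s
    have hsub : (Pmat M π).mulVec (Vpi M π r - v) s
        = (Pmat M π).mulVec (Vpi M π r) s - (Pmat M π).mulVec v s := by
      rw [Matrix.mulVec_sub]; rfl
    simp only [Pi.sub_apply, hsub]
    have := hv s
    nlinarith [M.disc_nonneg]
  intro s
  have := sub_fixed_nonpos (pmat_stoch M hπ) M.disc_nonneg M.disc_lt_one key s
  simpa [Pi.sub_apply, sub_nonpos] using this

/-- The Bellman optimality operator. -/
noncomputable def Tmap (M : MDP S A) (r : S × A → ℝ) (v : S → ℝ) : S → ℝ :=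
  fun s => Finset.univ.sup' Finset.univ_nonempty
    (fun a => r (s, a) + M.disc * ∑ s', M.p s a s' * v s')

lemma tmap_contract (M : MDP S A) (r : S × A → ℝ) (v w : S → ℝ) :
    dist (Tmap M r v) (Tmap M r w) ≤ M.disc * dist v w := by
  rw [dist_pi_le_iff (mul_nonneg M.disc_nonneg dist_nonneg)]
  intro s
  have hvw : ∀ s', |v s' - w s'| ≤ dist v w := by
    intro s'
    have := dist_le_pi_dist v w s'
    rwa [Real.dist_eq] at this
  have key : ∀ (x y : S → ℝ), (∀ s', x s' - y s' ≤ dist v w) →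
      Tmap M r x s ≤ Tmap M r y s + M.disc * dist v w := by
    intro x y hxy
    apply Finset.sup'_le
    intro a _
    have h1 : ∑ s', M.p s a s' * x s' ≤ (∑ s', M.p s a s' * y s') + dist v w := by
      have : ∑ s', M.p s a s' * x s' ≤ ∑ s', M.p s a s' * (y s' + dist v w) :=
        Finset.sum_le_sum fun s' _ => mul_le_mul_of_nonneg_left
          (by have := hxy s'; linarith) (M.p_nonneg s a s')
      calc ∑ s', M.p s a s' * x s' ≤ ∑ s', M.p s a s' * (y s' + dist v w) := this
        _ = (∑ s', M.p s a s' * y s') + dist v w := by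
            rw [show ∑ s', M.p s a s' * (y s' + dist v w)
                = (∑ s', M.p s a s' * y s') + (∑ s', M.p s a s') * dist v w by
              rw [Finset.sum_mul]; rw [← Finset.sum_add_distrib];
              exact Finset.sum_congr rfl fun s' _ => by ring]
            rw [M.p_sum_one s a, one_mul]
    have h2 : r (s, a) + M.disc * ∑ s', M.p s a s' * x s'
        ≤ (r (s, a) + M.disc * ∑ s', M.p s a s' * y s') + M.disc * dist v w := by
      nlinarith [M.disc_nonneg]
    exact le_trans h2 (by
      have : r (s, a) + M.disc * ∑ s', M.p s a s' * y s' ≤ Tmap M r y s :=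
        Finset.le_sup' (fun a => r (s, a) + M.disc * ∑ s', M.p s a s' * y s')
          (Finset.mem_univ a)
      linarith)
  rw [Real.dist_eq, abs_sub_le_iff]
  constructor
  · have := key v w fun s' => by have := hvw s'; have := abs_le.mp this; linarith [(abs_le.mp (hvw s')).2]
    linarith
  · have := key w v fun s' => by have := (abs_le.mp (hvw s')).1; linarith
    linarith

lemma tmap_contracting (M : MDP S A) (r : S × A → ℝ) :
    ContractingWith ⟨M.disc, M.disc_nonneg⟩ (Tmap M r) := by
  constructor
  · exact_mod_cast M.disc_lt_one
  · apply LipschitzWith.of_dist_le_mul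
    intro v w
    exact tmap_contract M r v w

/-- Any fixed point of the γ-contraction is unique. -/
lemma tmap_fixed_unique (M : MDP S A) (r : S × A → ℝ) {v w : S → ℝ}
    (hv : Tmap M r v = v) (hw : Tmap M r w = w) : v = w := by
  have h1 := (tmap_contracting M r).fixedPoint_unique (x := v) hv
  have h2 := (tmap_contracting M r).fixedPoint_unique (x := w) hw
  rw [h1, h2]

end AuxOpt
section AuxVstar

variable {S A : Type} [Fintype S] [Fintype A] [DecidableEq S] [DecidableEq A] [Nonempty A]

lemma detPolicy_isPolicy (d : S → A) : IsPolicy (detPolicy (S := S) d) := by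
  constructor
  · intro s a; unfold detPolicy; split <;> norm_num
  · intro s; unfold detPolicy; simp

lemma rvec_det (d : S → A) (r : S × A → ℝ) (s : S) :
    Rvec (detPolicy d) r s = r (s, d s) := by
  unfold Rvec detPolicy
  rw [Finset.sum_eq_single (d s)] <;> simp_all

lemma pmat_det (M : MDP S A) (d : S → A) (s s' : S) :
    Pmat M (detPolicy d) s s' = M.p s (d s) s' := by
  show ∑ a, detPolicy d s a * M.p s a s' = _
  unfold detPolicy
  rw [Finset.sum_eq_single (d s)] <;> simp_all

/-- Averaging over a policy stays below the optimality operator. -/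
lemma rvec_add_le_tmap (M : MDP S A) {π : S → A → ℝ} (hπ : IsPolicy π) (r : S × A → ℝ)
    (v : S → ℝ) (s : S) :
    Rvec π r s + M.disc * (Pmat M π).mulVec v s ≤ Tmap M r v s := by
  have hmv : (Pmat M π).mulVec v s = ∑ a, π s a * ∑ s', M.p s a s' * v s' := by
    show ∑ s', (∑ a, π s a * M.p s a s') * v s' = _
    rw [show (∑ s', (∑ a, π s a * M.p s a s') * v s')
        = ∑ s', ∑ a, π s a * M.p s a s' * v s' by
      exact Finset.sum_congr rfl fun s' _ => Finset.sum_mul _ _ _]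
    rw [Finset.sum_comm]
    apply Finset.sum_congr rfl
    intro a _
    rw [Finset.mul_sum]
    apply Finset.sum_congr rfl
    intro s' _; ring
  have hlhs : Rvec π r s + M.disc * (Pmat M π).mulVec v s
      = ∑ a, π s a * (r (s, a) + M.disc * ∑ s', M.p s a s' * v s') := by
    rw [hmv]
    unfold Rvec
    rw [Finset.mul_sum, ← Finset.sum_add_distrib]
    apply Finset.sum_congr rfl
    intro a _; ring
  rw [hlhs]
  calc ∑ a, π s a * (r (s, a) + M.disc * ∑ s', M.p s a s' * v s')
      ≤ ∑ a, π s a * Tmap M r v s := by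
        apply Finset.sum_le_sum
        intro a _
        exact mul_le_mul_of_nonneg_left
          (Finset.le_sup' (fun a => r (s, a) + M.disc * ∑ s', M.p s a s' * v s')
            (Finset.mem_univ a)) (hπ.1 s a)
    _ = Tmap M r v s := by rw [← Finset.sum_mul, hπ.2 s, one_mul]

lemma tmap_q_le (M : MDP S A) (r : S × A → ℝ) (v : S → ℝ) (s : S) (a : A) :
    r (s, a) + M.disc * ∑ s', M.p s a s' * v s' ≤ Tmap M r v s :=
  Finset.le_sup' (fun a => r (s, a) + M.disc * ∑ s', M.p s a s' * v s') (Finset.mem_univ a)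

instance : Nonempty {π : S → A → ℝ // IsPolicy π} :=
  ⟨⟨detPolicy fun _ => Classical.arbitrary A, detPolicy_isPolicy _⟩⟩

/-- The optimal value function is the unique fixed point of the optimality operator. -/
lemma vstar_eq_of_fixed (M : MDP S A) (r : S × A → ℝ) {v : S → ℝ}
    (hfix : Tmap M r v = v) : Vstar M r = v := by
  -- every policy's value is below v
  have hub : ∀ (π : S → A → ℝ), IsPolicy π → ∀ s, Vpi M π r s ≤ v s := by
    intro π hπ
    apply vpi_le_of_super M hπ r
    intro s
    calc Rvec π r s + M.disc * (Pmat M π).mulVec v s ≤ Tmap M r v s :=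
          rvec_add_le_tmap M hπ r v s
      _ = v s := by rw [hfix]
  -- greedy deterministic policy attains v
  have hgreedy : ∃ d : S → A, ∀ s,
      v s = Rvec (detPolicy d) r s + M.disc * (Pmat M (detPolicy d)).mulVec v s := by
    have hch : ∀ s : S, ∃ a : A,
        Tmap M r v s = r (s, a) + M.disc * ∑ s', M.p s a s' * v s' := by
      intro s
      obtain ⟨a, -, ha⟩ := Finset.exists_mem_eq_sup' Finset.univ_nonempty
        (fun a => r (s, a) + M.disc * ∑ s', M.p s a s' * v s')
      exact ⟨a, ha⟩
    choose d hd using hch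
    refine ⟨d, fun s => ?_⟩
    have hmv : (Pmat M (detPolicy d)).mulVec v s = ∑ s', M.p s (d s) s' * v s' := by
      show ∑ s', Pmat M (detPolicy d) s s' * v s' = _
      exact Finset.sum_congr rfl fun s' _ => by rw [pmat_det]
    rw [rvec_det, hmv, ← hd s, hfix]
  obtain ⟨d, hd⟩ := hgreedy
  have hvd : ∀ s, Vpi M (detPolicy d) r s = v s := by
    intro s
    exact le_antisymm
      (vpi_le_of_super M (detPolicy_isPolicy d) r (fun s => (hd s).ge) s)
      (le_vpi_of_sub M (detPolicy_isPolicy d) r (fun s => (hd s).le) s)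
  funext s
  apply le_antisymm
  · exact ciSup_le fun ⟨π, hπ⟩ => hub π hπ s
  · have hbdd : BddAbove (Set.range fun π : {π : S → A → ℝ // IsPolicy π} => Vpi M π.1 r s) := by
      refine ⟨v s, ?_⟩
      rintro _ ⟨⟨π, hπ⟩, rfl⟩
      exact hub π hπ s
    calc v s = Vpi M (detPolicy d) r s := (hvd s).symm
      _ ≤ Vstar M r s := le_ciSup hbdd ⟨detPolicy d, detPolicy_isPolicy d⟩

/-- Bellman optimality equation for `Vstar`. -/
lemma vstar_bellman (M : MDP S A) (r : S × A → ℝ) :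
    Tmap M r (Vstar M r) = Vstar M r := by
  have hfix := (tmap_contracting M r).fixedPoint_isFixedPt
  have := vstar_eq_of_fixed M r hfix
  rw [this]; exact hfix

lemma vstar_eq_sup_qstar (M : MDP S A) (r : S × A → ℝ) (s : S) :
    Vstar M r s = Finset.univ.sup' Finset.univ_nonempty (fun a => Qstar M r s a) := by
  conv_lhs => rw [← vstar_bellman M r]
  rfl

lemma qstar_le_vstar (M : MDP S A) (r : S × A → ℝ) (s : S) (a : A) :
    Qstar M r s a ≤ Vstar M r s := by
  rw [vstar_eq_sup_qstar]
  exact Finset.le_sup' (fun a => Qstar M r s a) (Finset.mem_univ a)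

end AuxVstar
section AuxSoftmax

variable {S A : Type} [Fintype S] [Fintype A] [DecidableEq S] [DecidableEq A] [Nonempty A]

lemma ciSup_pi_eq_sup' (π : S → A → ℝ) (s : S) :
    (⨆ a', π s a') = Finset.univ.sup' Finset.univ_nonempty (π s) :=
  (Finset.sup'_univ_eq_ciSup (π s)).symm

lemma sup_pi_pos {π : S → A → ℝ} (hpos : ∀ s a, 0 < π s a) (s : S) :
    0 < ⨆ a', π s a' := by
  rw [ciSup_pi_eq_sup']
  exact lt_of_lt_of_le (hpos s (Classical.arbitrary A))
    (Finset.le_sup' (π s) (Finset.mem_univ _))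

/-- Main identity in the forward direction: the log-ratio equals the optimal advantage. -/
lemma birl_main {M : MDP S A} {bet : ℝ} (hbet : 0 < bet) {π : S → A → ℝ}
    {r : S × A → ℝ} (h : r ∈ RBIRL M bet π) (s : S) (a : A) :
    bet * Real.log (π s a / ⨆ a', π s a') = Astar M r s a := by
  set Z : ℝ := ∑ a', Real.exp (Qstar M r s a' / bet) with hZ
  have hZpos : 0 < Z := Finset.sum_pos (fun a' _ => Real.exp_pos _) Finset.univ_nonempty
  have hπ_eq : ∀ a, π s a = Real.exp (Qstar M r s a / bet) / Z := fun a => h s a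
  have hsup : (⨆ a', π s a') = Real.exp (Vstar M r s / bet) / Z := by
    rw [ciSup_pi_eq_sup']
    apply le_antisymm
    · apply Finset.sup'_le
      intro a _
      rw [hπ_eq a]
      gcongr
      exact qstar_le_vstar M r s a
    · obtain ⟨a1, -, ha1⟩ := Finset.exists_mem_eq_sup' Finset.univ_nonempty
        (fun a => Qstar M r s a)
      have : Real.exp (Vstar M r s / bet) / Z = π s a1 := by
        rw [hπ_eq a1, vstar_eq_sup_qstar, ha1]
      rw [this]
      exact Finset.le_sup' (π s) (Finset.mem_univ a1)
  have hratio : π s a / (⨆ a', π s a')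
      = Real.exp ((Qstar M r s a - Vstar M r s) / bet) := by
    have hstep : Real.exp (Qstar M r s a / bet) / Z / (Real.exp (Vstar M r s / bet) / Z)
        = Real.exp (Qstar M r s a / bet) / Real.exp (Vstar M r s / bet) := by
      rw [div_div_div_comm, div_self (ne_of_gt hZpos), div_one]
    rw [hπ_eq a, hsup, hstep, ← Real.exp_sub, ← sub_div]
  rw [hratio, Real.log_exp, Astar]
  field_simp

lemma qstar_eq (M : MDP S A) (r : S × A → ℝ) (s : S) (a : A) :
    Qstar M r s a = r (s, a) + M.disc * ∑ s', M.p s a s' * Vstar M r s' := rfl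

/-- Forward: explicit formula for rewards in the BIRL set. -/
lemma birl_r_eq {M : MDP S A} {bet : ℝ} (hbet : 0 < bet) {π : S → A → ℝ}
    {r : S × A → ℝ} (h : r ∈ RBIRL M bet π) (s : S) (a : A) :
    r (s, a) = Vstar M r s - M.disc * (∑ s', M.p s a s' * Vstar M r s') +
      bet * Real.log (π s a / ⨆ a', π s a') := by
  have h1 := birl_main hbet h s a
  have h2 := qstar_eq M r s a
  rw [Astar] at h1
  linarith

/-- Backward direction. -/
lemma birl_of_param {M : MDP S A} {bet : ℝ} (hbet : 0 < bet) {π : S → A → ℝ}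
    (hπ : IsPolicy π) (hpos : ∀ s a, 0 < π s a) {r : S × A → ℝ} {V : S → ℝ}
    (hV : ∀ s a, r (s, a) = V s - M.disc * ∑ s', M.p s a s' * V s' +
      bet * Real.log (π s a / ⨆ a', π s a')) :
    r ∈ RBIRL M bet π := by
  set c : S → A → ℝ := fun s a => bet * Real.log (π s a / ⨆ a', π s a') with hc
  have hq : ∀ s a, r (s, a) + M.disc * ∑ s', M.p s a s' * V s' = V s + c s a := by
    intro s a; have := hV s a; simp only [hc]; linarith
  have hcle : ∀ s a, c s a ≤ 0 := by
    intro s a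
    apply mul_nonpos_of_nonneg_of_nonpos hbet.le
    apply Real.log_nonpos
    · exact (div_nonneg (hpos s a).le (sup_pi_pos hpos s).le)
    · rw [div_le_one (sup_pi_pos hpos s)]
      rw [ciSup_pi_eq_sup']
      exact Finset.le_sup' (π s) (Finset.mem_univ a)
  have hattain : ∀ s, ∃ a0, c s a0 = 0 := by
    intro s
    obtain ⟨a0, -, ha0⟩ := Finset.exists_mem_eq_sup' Finset.univ_nonempty (π s)
    refine ⟨a0, ?_⟩
    simp only [hc]
    rw [ciSup_pi_eq_sup', ha0, div_self (ne_of_gt (hpos s a0)), Real.log_one, mul_zero]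
  have hfix : Tmap M r V = V := by
    funext s
    obtain ⟨a0, ha0⟩ := hattain s
    apply le_antisymm
    · apply Finset.sup'_le
      intro a _
      rw [hq s a]
      linarith [hcle s a]
    · calc V s = r (s, a0) + M.disc * ∑ s', M.p s a0 s' * V s' := by
            rw [hq s a0, ha0, add_zero]
        _ ≤ Tmap M r V s :=
            Finset.le_sup' (fun a => r (s, a) + M.disc * ∑ s', M.p s a s' * V s')
              (Finset.mem_univ a0)
  have hVstar : Vstar M r = V := vstar_eq_of_fixed M r hfix
  intro s a
  have hQ : ∀ a, Qstar M r s a = V s + c s a := by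
    intro a
    rw [qstar_eq, hVstar, hq s a]
  have hexp : ∀ a, Real.exp (Qstar M r s a / bet)
      = Real.exp (V s / bet) * (π s a / ⨆ a', π s a') := by
    intro a
    rw [hQ a, add_div, Real.exp_add]
    congr 1
    have : c s a / bet = Real.log (π s a / ⨆ a', π s a') := by
      simp only [hc]; field_simp
    rw [this, Real.exp_log (div_pos (hpos s a) (sup_pi_pos hpos s))]
  have hsum : ∑ a', Real.exp (Qstar M r s a' / bet)
      = Real.exp (V s / bet) / ⨆ a', π s a' := by
    simp only [hexp]
    rw [← Finset.mul_sum]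
    rw [show (∑ a', π s a' / ⨆ a', π s a') = (∑ a', π s a') / ⨆ a', π s a' from
      (Finset.sum_div _ _ _).symm]
    rw [hπ.2 s]
    ring
  rw [hexp a, hsum]
  have h1 : (0:ℝ) < ⨆ a', π s a' := sup_pi_pos hpos s
  have h2 : Real.exp (V s / bet) ≠ 0 := Real.exp_ne_zero _
  field_simp

end AuxSoftmax
/-- explicit parametrization of the BIRL feasible set. -/
theorem statement17 {S A : Type} [Fintype S] [Fintype A] [DecidableEq S] [DecidableEq A]
    [Nonempty A]
    (M : MDP S A) (bet : ℝ) (hbet : 0 < bet)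
    (π : S → A → ℝ) (hπ : IsPolicy π) (hpos : ∀ s a, 0 < π s a) (r : S × A → ℝ) :
    (r ∈ RBIRL M bet π ↔
      ∃ V : S → ℝ, ∀ s a, r (s, a) =
        V s - M.disc * ∑ s', M.p s a s' * V s' +
          bet * Real.log (π s a / ⨆ a', π s a')) ∧
    (r ∈ RBIRL M bet π →
      (∀ s a, r (s, a) =
        Vstar M r s - M.disc * (∑ s', M.p s a s' * Vstar M r s') +
          bet * Real.log (π s a / ⨆ a', π s a')) ∧
      ∀ s a, bet * Real.log (π s a / ⨆ a', π s a') = Astar M r s a) := by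
  constructor
  · constructor
    · intro h
      exact ⟨Vstar M r, fun s a => birl_r_eq hbet h s a⟩
    · rintro ⟨V, hV⟩
      exact birl_of_param hbet hπ hpos hV
  · intro h
    exact ⟨fun s a => birl_r_eq hbet h s a, fun s a => birl_main hbet h s a⟩
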